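/- Let $f: \mathbb{R}^d \to \mathbb{R}$ be differentiable with $|\nabla f(u) - \nabla f(v)| \leq M|u - v|$ for all $u, v$. Then for all $a, b \in \mathbb{R}^d$, $\left|f(b) - f(a) - \frac{1}{2}(\nabla f(a) + \nabla f(b)) \cdot (b - a)\right| \leq \frac{M}{4}|b - a|^2$. -/

import Mathlib

open scoped RealInnerProductSpace

/-- Trapezoid-rule error bound: if `f : ℝᵈ → ℝ` is differentiable with `M`-Lipschitz
gradient `g`, then `|f(b) - f(a) - ½(∇f(a) + ∇f(b))·(b - a)| ≤ (M/4)|b - a|²`. -/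
theorem stmt10 {d : ℕ} (f : EuclideanSpace ℝ (Fin d) → ℝ)
    (g : EuclideanSpace ℝ (Fin d) → EuclideanSpace ℝ (Fin d)) (M : ℝ)
    (hdiff : ∀ x, HasGradientAt f (g x) x)
    (hLip : ∀ u v, ‖g u - g v‖ ≤ M * ‖u - v‖) :
    ∀ a b : EuclideanSpace ℝ (Fin d),
      |f b - f a - 2⁻¹ * ⟪g a + g b, b - a⟫| ≤ M / 4 * ‖b - a‖ ^ 2 := by
  intro a b
  set c : EuclideanSpace ℝ (Fin d) := b - a with hc
  set γ : ℝ → EuclideanSpace ℝ (Fin d) := fun t => a + t • c with hγ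
  set h : ℝ → ℝ := fun t => ⟪g (γ t), c⟫ with hh
  -- continuity of g
  have hgcont : Continuous g := by
    have : LipschitzWith ⟨max M 0, le_max_right _ _⟩ g := by
      apply LipschitzWith.of_dist_le_mul
      intro u v
      rw [dist_eq_norm, dist_eq_norm]
      exact (hLip u v).trans
        (mul_le_mul_of_nonneg_right (le_max_left _ _) (norm_nonneg _))
    exact this.continuous
  have hγcont : Continuous γ := by fun_prop
  have hhcont : Continuous h := by
    apply Continuous.inner (hgcont.comp hγcont) continuous_const
  have hγ0 : γ 0 = a := by simp [hγ]
  have hγ1 : γ 1 = b := by simp [hγ, hc]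
  -- derivative of f ∘ γ
  have hderiv : ∀ t : ℝ, HasDerivAt (fun s => f (γ s)) (h t) t := by
    intro t
    have hγd : HasDerivAt γ c t := by
      have : HasDerivAt (fun s : ℝ => s • c) ((1:ℝ) • c) t := (hasDerivAt_id t).smul_const c
      rw [one_smul] at this
      exact this.const_add a
    have hf := (hdiff (γ t)).hasFDerivAt
    have := hf.comp_hasDerivAt t hγd
    simpa [hh, InnerProductSpace.toDual_apply_apply, Function.comp_def] using this
  have hint : ∀ p q : ℝ, IntervalIntegrable h MeasureTheory.volume p q :=
    fun p q => hhcont.intervalIntegrable p q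
  have key : f b - f a = ∫ t in (0:ℝ)..1, h t := by
    rw [intervalIntegral.integral_eq_sub_of_hasDerivAt (fun t _ => hderiv t) (hint 0 1),
      hγ0, hγ1]
  -- split at 1/2
  have hsplit : (∫ t in (0:ℝ)..1, h t) =
      (∫ t in (0:ℝ)..(1/2:ℝ), h t) + ∫ t in (1/2:ℝ)..1, h t :=
    (intervalIntegral.integral_add_adjacent_intervals (hint 0 (1/2)) (hint (1/2) 1)).symm
  have hinner : ⟪g a + g b, c⟫ = h 0 + h 1 := by
    simp [hh, hγ0, hγ1, inner_add_left]
  -- rewrite the error as two integrals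
  have hrw : f b - f a - 2⁻¹ * ⟪g a + g b, c⟫ =
      (∫ t in (0:ℝ)..(1/2:ℝ), (h t - h 0)) + ∫ t in (1/2:ℝ)..1, (h t - h 1) := by
    rw [intervalIntegral.integral_sub (hint 0 (1/2)) (intervalIntegrable_const),
      intervalIntegral.integral_sub (hint (1/2) 1) (intervalIntegrable_const),
      intervalIntegral.integral_const, intervalIntegral.integral_const,
      key, hsplit, hinner]
    ring_nf
  -- pointwise bounds
  have hb0 : ∀ t ∈ Set.Icc (0:ℝ) (1/2), |h t - h 0| ≤ M * ‖c‖^2 * t := by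
    intro t ht
    have : h t - h 0 = ⟪g (γ t) - g a, c⟫ := by
      simp [hh, hγ0, inner_sub_left]
    rw [this]
    calc |⟪g (γ t) - g a, c⟫| ≤ ‖g (γ t) - g a‖ * ‖c‖ := abs_real_inner_le_norm _ _
      _ ≤ (M * ‖γ t - a‖) * ‖c‖ := mul_le_mul_of_nonneg_right (hLip _ _) (norm_nonneg _)
      _ = M * ‖c‖^2 * t := by
          have : γ t - a = t • c := by simp [hγ]
          rw [this, norm_smul, Real.norm_eq_abs, abs_of_nonneg ht.1]; ring
  have hb1 : ∀ t ∈ Set.Icc (1/2:ℝ) 1, |h t - h 1| ≤ M * ‖c‖^2 * (1 - t) := by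
    intro t ht
    have : h t - h 1 = ⟪g (γ t) - g b, c⟫ := by
      simp [hh, hγ1, inner_sub_left]
    rw [this]
    calc |⟪g (γ t) - g b, c⟫| ≤ ‖g (γ t) - g b‖ * ‖c‖ := abs_real_inner_le_norm _ _
      _ ≤ (M * ‖γ t - b‖) * ‖c‖ := mul_le_mul_of_nonneg_right (hLip _ _) (norm_nonneg _)
      _ = M * ‖c‖^2 * (1 - t) := by
          have h1 : γ t - b = (t - 1) • c := by
            simp [hγ, hc, sub_smul]
            module
          rw [h1, norm_smul, Real.norm_eq_abs, abs_of_nonpos (by linarith [ht.2])]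
          ring
  -- integral bounds
  have hI0 : |∫ t in (0:ℝ)..(1/2:ℝ), (h t - h 0)| ≤ M * ‖c‖^2 / 8 := by
    have hle : (0:ℝ) ≤ 1/2 := by norm_num
    calc |∫ t in (0:ℝ)..(1/2:ℝ), (h t - h 0)|
        ≤ ∫ t in (0:ℝ)..(1/2:ℝ), |h t - h 0| := by
          simpa [Real.norm_eq_abs] using
            intervalIntegral.abs_integral_le_integral_abs (f := fun t => h t - h 0)
              (a := (0:ℝ)) (b := (1/2:ℝ)) hle
      _ ≤ ∫ t in (0:ℝ)..(1/2:ℝ), M * ‖c‖^2 * t := by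
          apply intervalIntegral.integral_mono_on hle
          · exact ((hhcont.sub continuous_const).abs).intervalIntegrable _ _
          · exact ((continuous_const.mul continuous_id).intervalIntegrable _ _)
          · exact hb0
      _ = M * ‖c‖^2 / 8 := by
          rw [intervalIntegral.integral_const_mul, integral_id]
          ring
  have hI1 : |∫ t in (1/2:ℝ)..1, (h t - h 1)| ≤ M * ‖c‖^2 / 8 := by
    have hle : (1/2:ℝ) ≤ 1 := by norm_num
    calc |∫ t in (1/2:ℝ)..1, (h t - h 1)|
        ≤ ∫ t in (1/2:ℝ)..1, |h t - h 1| := by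
          simpa [Real.norm_eq_abs] using
            intervalIntegral.abs_integral_le_integral_abs (f := fun t => h t - h 1)
              (a := (1/2:ℝ)) (b := (1:ℝ)) hle
      _ ≤ ∫ t in (1/2:ℝ)..1, M * ‖c‖^2 * (1 - t) := by
          apply intervalIntegral.integral_mono_on hle
          · exact ((hhcont.sub continuous_const).abs).intervalIntegrable _ _
          · exact ((continuous_const.mul (continuous_const.sub continuous_id)).intervalIntegrable _ _)
          · exact hb1
      _ = M * ‖c‖^2 / 8 := by
          have : (∫ t in (1/2:ℝ)..1, (1 - t)) = 1/8 := by
            rw [intervalIntegral.integral_sub (f := fun _ : ℝ => (1:ℝ))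
              (g := fun t : ℝ => t) intervalIntegrable_const intervalIntegral.intervalIntegrable_id,
              intervalIntegral.integral_const, integral_id]
            norm_num
          rw [intervalIntegral.integral_const_mul, this]
          ring
  rw [hrw]
  calc |(∫ t in (0:ℝ)..(1/2:ℝ), (h t - h 0)) + ∫ t in (1/2:ℝ)..1, (h t - h 1)|
      ≤ |∫ t in (0:ℝ)..(1/2:ℝ), (h t - h 0)| + |∫ t in (1/2:ℝ)..1, (h t - h 1)| :=
        abs_add_le _ _
    _ ≤ M * ‖c‖^2 / 8 + M * ‖c‖^2 / 8 := add_le_add hI0 hI1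
    _ = M / 4 * ‖c‖^2 := by ring
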